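/- Oscillation estimate for Riesz potentials away from the support: if 0 < α < d, 0 < β ≤ d, Q is an open cube centered at x₀, f is measurable with supp f ⊆ (2Q)^c and I_α f ∈ L¹_loc(ℝ^d), then I_α f is continuous on Q and there exists c ∈ ℝ with ∫_Q |I_α f − c| dH^β_∞ ≤ C ℓ(Q)^β M_α f(x₀). -/

import Mathlib

open MeasureTheory Set
open scoped ENNReal NNReal

noncomputable section

/-- `ℝ^d` with the Euclidean metric. -/
abbrev Rd (d : ℕ) := EuclideanSpace ℝ (Fin d)

/-- Coerce a plain function to a point of `ℝ^d`. -/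
def toRd (d : ℕ) (a : Fin d → ℝ) : Rd d := WithLp.toLp 2 a

/-- The normalization constant `ω_β = π^{β/2}/Γ(β/2+1)`. -/
def omegaConst (β : ℝ) : ℝ := Real.pi ^ (β / 2) / Real.Gamma (β / 2 + 1)

/-- The Hausdorff content `H^β_∞` in `ℝ^d`, via countable covers by balls. -/
def hContent (d : ℕ) (β : ℝ) (E : Set (Rd d)) : ℝ≥0∞ :=
  ⨅ (c : ℕ → Rd d × ℝ) (_ : E ⊆ ⋃ i, Metric.ball (c i).1 (c i).2),
    ∑' i, ENNReal.ofReal (omegaConst β * (c i).2 ^ β)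

/-- The Choquet integral of a real-valued (nonnegative) function `g` over `Ω`
with respect to a set function `H`. -/
def choquet (d : ℕ) (H : Set (Rd d) → ℝ≥0∞) (Ω : Set (Rd d)) (g : Rd d → ℝ) : ℝ≥0∞ :=
  ∫⁻ t in Set.Ioi (0 : ℝ), H {x | x ∈ Ω ∧ t < g x}

/-- The Choquet integral of an `ℝ≥0∞`-valued function `g` over `Ω`
with respect to a set function `H`. -/
def choquetE (d : ℕ) (H : Set (Rd d) → ℝ≥0∞) (Ω : Set (Rd d)) (g : Rd d → ℝ≥0∞) : ℝ≥0∞ :=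
  ∫⁻ t in Set.Ioi (0 : ℝ), H {x | x ∈ Ω ∧ ENNReal.ofReal t < g x}

/-- Closed axis-parallel cube with corner `a` and side length `l`. -/
def cubeSet (d : ℕ) (a : Fin d → ℝ) (l : ℝ) : Set (Rd d) :=
  {y | ∀ i, a i ≤ y i ∧ y i ≤ a i + l}

/-- Open axis-parallel cube with corner `a` and side length `l`. -/
def cubeO (d : ℕ) (a : Fin d → ℝ) (l : ℝ) : Set (Rd d) :=
  {y | ∀ i, a i < y i ∧ y i < a i + l}

/-- Side length of a dyadic cube of generation `k` in the lattice with unit size `l₀`. -/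
def dSide (l₀ : ℝ) (k : ℤ) : ℝ := l₀ * 2 ^ k

/-- The dyadic cube, indexed by generation `k : ℤ` and position `m : Fin d → ℤ`,
of the dyadic lattice `D(Q₀)` generated by the cube `Q₀` with corner `a₀` and
side length `l₀`. -/
def dSet (d : ℕ) (a₀ : Fin d → ℝ) (l₀ : ℝ) (Q : ℤ × (Fin d → ℤ)) : Set (Rd d) :=
  {y | ∀ i, a₀ i + dSide l₀ Q.1 * (Q.2 i : ℝ) ≤ y i ∧
        y i < a₀ i + dSide l₀ Q.1 * ((Q.2 i : ℝ) + 1)}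

/-- The dyadic Hausdorff content `H^{β,Q₀}_∞`, via countable covers by dyadic cubes. -/
def dContent (d : ℕ) (β : ℝ) (a₀ : Fin d → ℝ) (l₀ : ℝ) (E : Set (Rd d)) : ℝ≥0∞ :=
  ⨅ (c : ℕ → ℤ × (Fin d → ℤ)) (_ : E ⊆ ⋃ i, dSet d a₀ l₀ (c i)),
    ∑' i, ENNReal.ofReal (dSide l₀ (c i).1 ^ β)

/-- The dyadic maximal function associated with `H^{β,Q₀}_∞`. -/
def dMax (d : ℕ) (β : ℝ) (a₀ : Fin d → ℝ) (l₀ : ℝ) (f : Rd d → ℝ) (x : Rd d) : ℝ≥0∞ :=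
  ⨆ (Q : ℤ × (Fin d → ℤ)) (_ : x ∈ dSet d a₀ l₀ Q),
    choquet d (dContent d β a₀ l₀) (dSet d a₀ l₀ Q) (fun y => |f y|)
      / ENNReal.ofReal (dSide l₀ Q.1 ^ β)

/-- The dyadic `β`-dimensional sharp maximal function `M^{#}_{β,Q₀}`. -/
def dSharp (d : ℕ) (β : ℝ) (a₀ : Fin d → ℝ) (l₀ : ℝ) (f : Rd d → ℝ) (x : Rd d) : ℝ≥0∞ :=
  ⨆ (Q : ℤ × (Fin d → ℤ)) (_ : x ∈ dSet d a₀ l₀ Q),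
    ⨅ (c : ℝ),
      choquet d (dContent d β a₀ l₀) (dSet d a₀ l₀ Q) (fun y => |f y - c|)
        / ENNReal.ofReal (dSide l₀ Q.1 ^ β)

/-- The `β`-dimensional sharp maximal function `M^{#}_β`, over all axis-parallel cubes. -/
def sharpMax (d : ℕ) (β : ℝ) (f : Rd d → ℝ) (x : Rd d) : ℝ≥0∞ :=
  ⨆ (a : Fin d → ℝ) (l : ℝ) (_ : 0 < l) (_ : x ∈ cubeSet d a l),
    ⨅ (c : ℝ),
      choquet d (hContent d β) (cubeSet d a l) (fun y => |f y - c|) / ENNReal.ofReal (l ^ β)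

/-- The `β`-dimensional maximal operator `M_{H^β_∞}` over balls. -/
def ballMax (d : ℕ) (β : ℝ) (f : Rd d → ℝ) (x : Rd d) : ℝ≥0∞ :=
  ⨆ (r : ℝ) (_ : 0 < r),
    choquet d (hContent d β) (Metric.ball x r) (fun y => |f y|)
      / hContent d β (Metric.ball x r)

/-- The Riesz normalization constant `γ(α)`. -/
def rieszConst (d : ℕ) (α : ℝ) : ℝ :=
  Real.pi ^ ((d : ℝ) / 2) * 2 ^ α * Real.Gamma (α / 2) / Real.Gamma (((d : ℝ) - α) / 2)

/-- The Riesz potential `I_α μ` of a measure. -/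
def rieszM (d : ℕ) (α : ℝ) (μ : Measure (Rd d)) (x : Rd d) : ℝ≥0∞ :=
  (ENNReal.ofReal (rieszConst d α))⁻¹ * ∫⁻ y, ENNReal.ofReal (dist x y ^ (α - (d : ℝ))) ∂μ

/-- The (real-valued) Riesz potential `I_α f` of a function. -/
def rieszR (d : ℕ) (α : ℝ) (f : Rd d → ℝ) (x : Rd d) : ℝ :=
  (rieszConst d α)⁻¹ * ∫ y, f y * dist x y ^ (α - (d : ℝ))

/-- The fractional maximal function `M_α μ` of a measure. -/
def fracMaxM (d : ℕ) (α : ℝ) (μ : Measure (Rd d)) (x : Rd d) : ℝ≥0∞ :=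
  ⨆ (a : Fin d → ℝ) (l : ℝ) (_ : 0 < l) (_ : x ∈ cubeSet d a l),
    μ (cubeSet d a l) * ENNReal.ofReal (l ^ (α - (d : ℝ)))

/-- The fractional maximal function `M_α f` of a function. -/
def fracMaxF (d : ℕ) (α : ℝ) (f : Rd d → ℝ) (x : Rd d) : ℝ≥0∞ :=
  ⨆ (a : Fin d → ℝ) (l : ℝ) (_ : 0 < l) (_ : x ∈ cubeSet d a l),
    (∫⁻ y in cubeSet d a l, ENNReal.ofReal |f y|) * ENNReal.ofReal (l ^ (α - (d : ℝ)))

/-- The weak `L^{p,∞}(H^β_∞)` quasinorm. -/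
def weakNorm (d : ℕ) (β : ℝ) (p : ℝ) (g : Rd d → ℝ≥0∞) : ℝ≥0∞ :=
  ⨆ (t : ℝ) (_ : 0 < t),
    ENNReal.ofReal t * hContent d β {x | ENNReal.ofReal t < g x} ^ (1 / p)

/-- The local Morrey norm `‖μ‖_{M^β(Ω)}`. -/
def morreyNorm (d : ℕ) (β : ℝ) (μ : Measure (Rd d)) (Ω : Set (Rd d)) : ℝ≥0∞ :=
  ⨆ (x : Rd d) (_ : x ∈ Ω) (r : ℝ) (_ : 0 < r),
    μ (Metric.ball x r ∩ Ω) / ENNReal.ofReal (r ^ β)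

/-- Generation-`k` cell at position `m` of a dyadic grid with generation offsets `o`. -/
def gcell (d : ℕ) (o : ℤ → Fin d → ℝ) (k : ℤ) (m : Fin d → ℤ) : Set (Rd d) :=
  {y | ∀ i, o k i + 2 ^ k * (m i : ℝ) ≤ y i ∧ y i < o k i + 2 ^ k * ((m i : ℝ) + 1)}

/-- A dyadic grid in `ℝ^d`: each generation `k` consists of half-open cubes of side `2^k`
partitioning `ℝ^d`, and consecutive generations are nested. -/
structure DyadicGrid (d : ℕ) where
  o : ℤ → Fin d → ℝ
  nested : ∀ k m, ∃ m', gcell d o k m ⊆ gcell d o (k + 1) m'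

/-- The dyadic Riesz potential `I^D_α μ` with respect to a dyadic grid. -/
def dyadicRiesz (d : ℕ) (G : DyadicGrid d) (α : ℝ) (μ : Measure (Rd d)) (x : Rd d) : ℝ≥0∞ :=
  ∑' p : ℤ × (Fin d → ℤ),
    Set.indicator (gcell d G.o p.1 p.2)
      (fun _ => μ (gcell d G.o p.1 p.2) * ENNReal.ofReal (((2 : ℝ) ^ p.1) ^ (α - (d : ℝ)))) x

/-- The exponential on `ℝ≥0∞`. -/
def expE (t : ℝ≥0∞) : ℝ≥0∞ := if t = ∞ then ∞ else ENNReal.ofReal (Real.exp t.toReal)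
section Aux

open Real

lemma aux_abs_coord_le_dist {d : ℕ} (x y : Rd d) (i : Fin d) : |x i - y i| ≤ dist x y := by
  rw [EuclideanSpace.dist_eq, ← Real.dist_eq]
  calc dist (x i) (y i) = Real.sqrt (dist (x i) (y i) ^ 2) := (Real.sqrt_sq dist_nonneg).symm
    _ ≤ _ := Real.sqrt_le_sqrt (Finset.single_le_sum
        (fun j _ => sq_nonneg (dist (x j) (y j))) (Finset.mem_univ i))

lemma aux_dist_le_sqrt {d : ℕ} (x y : Rd d) {s : ℝ} (hs : 0 ≤ s)
    (h : ∀ i, |x i - y i| ≤ s) : dist x y ≤ Real.sqrt d * s := by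
  rw [EuclideanSpace.dist_eq]
  have h1 : ∑ i, dist (x i) (y i) ^ 2 ≤ (d : ℝ) * s ^ 2 := by
    calc ∑ i, dist (x i) (y i) ^ 2 ≤ ∑ _i : Fin d, s ^ 2 :=
          Finset.sum_le_sum (fun i _ => by
            have hi := h i
            rw [Real.dist_eq]
            exact pow_le_pow_left₀ (abs_nonneg _) hi 2)
      _ = (d : ℝ) * s ^ 2 := by simp [Finset.sum_const]
  calc Real.sqrt (∑ i, dist (x i) (y i) ^ 2) ≤ Real.sqrt ((d : ℝ) * s ^ 2) :=
        Real.sqrt_le_sqrt h1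
    _ = Real.sqrt d * s := by
        rw [Real.sqrt_mul (by positivity), Real.sqrt_sq hs]

lemma aux_mvt_rpow {γ a b : ℝ} (hγ : γ < 0) (ha : 0 < a) (hab : a ≤ b) :
    |b ^ γ - a ^ γ| ≤ (-γ) * a ^ (γ - 1) * (b - a) := by
  have key : ∀ x ∈ Set.Icc a b, HasDerivWithinAt (fun t : ℝ => t ^ γ)
      ((fun t : ℝ => γ * t ^ (γ - 1)) x) (Set.Icc a b) x := fun x hx =>
    (Real.hasDerivAt_rpow_const (Or.inl (ha.trans_le hx.1).ne')).hasDerivWithinAt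
  have bound : ∀ x ∈ Set.Icc a b, ‖(fun t : ℝ => γ * t ^ (γ - 1)) x‖ ≤ (-γ) * a ^ (γ - 1) := by
    intro x hx
    simp only [norm_mul, Real.norm_eq_abs]
    rw [abs_of_neg hγ, abs_of_nonneg (Real.rpow_nonneg (le_of_lt (ha.trans_le hx.1)) _)]
    exact mul_le_mul_of_nonneg_left
      (Real.rpow_le_rpow_of_nonpos ha hx.1 (by linarith)) (by linarith)
  have h := Convex.norm_image_sub_le_of_norm_hasDerivWithin_le key bound (convex_Icc a b)
    (Set.left_mem_Icc.2 hab) (Set.right_mem_Icc.2 hab)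
  rw [Real.norm_eq_abs, Real.norm_eq_abs, abs_of_nonneg (by linarith : (0:ℝ) ≤ b - a)] at h
  linarith [h]

lemma aux_measurable_kernel {d : ℕ} (x : Rd d) {γ : ℝ} (hγ : γ < 0) :
    Measurable fun y : Rd d => dist x y ^ γ := by
  have hd : Measurable fun y : Rd d => dist x y :=
    (continuous_const.dist continuous_id).measurable
  have heq : (fun y : Rd d => dist x y ^ γ)
      = fun y => if dist x y = 0 then 0 else Real.exp (Real.log (dist x y) * γ) := by
    funext y
    by_cases h : dist x y = 0
    · simp [h, Real.zero_rpow hγ.ne]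
    · rw [if_neg h, Real.rpow_def_of_pos (lt_of_le_of_ne dist_nonneg (Ne.symm h))]
  rw [heq]
  exact Measurable.ite (measurableSet_eq_fun hd measurable_const)
    measurable_const (Real.measurable_exp.comp ((Real.measurable_log.comp hd).mul_const γ))

lemma aux_hContent_mono {d : ℕ} {β : ℝ} {E F : Set (Rd d)} (h : E ⊆ F) :
    hContent d β E ≤ hContent d β F :=
  le_iInf₂ fun c hc => iInf₂_le c (h.trans hc)

lemma aux_hContent_empty {d : ℕ} {β : ℝ} (hβ : 0 < β) : hContent d β (∅ : Set (Rd d)) = 0 := by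
  refine le_antisymm ?_ zero_le
  refine iInf₂_le_of_le (fun _ => ((0 : Rd d), 0)) (Set.empty_subset _) ?_
  simp [Real.zero_rpow hβ.ne']

lemma aux_hContent_ball {d : ℕ} {β : ℝ} (hβ : 0 < β) {E : Set (Rd d)} {z : Rd d} {r : ℝ}
    (h : E ⊆ Metric.ball z r) : hContent d β E ≤ ENNReal.ofReal (omegaConst β * r ^ β) := by
  refine iInf₂_le_of_le (fun i => if i = 0 then (z, r) else (z, 0)) ?_ ?_
  · refine h.trans ?_
    intro x hx
    exact Set.mem_iUnion.2 ⟨0, by simpa using hx⟩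
  · rw [tsum_eq_single 0 (fun b hb => by simp [hb, Real.zero_rpow hβ.ne'])]
    simp

lemma aux_exists_pow {l T : ℝ} (hl : 0 < l) (h : l ≤ T) :
    ∃ k : ℕ, 2 ^ k * l ≤ T ∧ T < 2 ^ (k + 1) * l := by
  have hex : ∃ k : ℕ, T < 2 ^ (k + 1) * l := by
    obtain ⟨n, hn⟩ := pow_unbounded_of_one_lt (T / l) (by norm_num : (1:ℝ) < 2)
    refine ⟨n, ?_⟩
    have h1 : T < 2 ^ n * l := by
      have := (div_lt_iff₀ hl).1 hn
      linarith
    have h2 : (2:ℝ) ^ n * l ≤ 2 ^ (n + 1) * l := by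
      have : (2:ℝ) ^ n ≤ 2 ^ (n + 1) := by
        apply pow_le_pow_right₀ (by norm_num)
        omega
      nlinarith
    linarith
  refine ⟨Nat.find hex, ?_, Nat.find_spec hex⟩
  rcases Nat.eq_zero_or_pos (Nat.find hex) with h0 | h0
  · rw [h0]; simpa using h
  · obtain ⟨j, hj⟩ := Nat.exists_eq_succ_of_ne_zero h0.ne'
    have := Nat.find_min hex (m := j) (by omega)
    push_neg at this
    rw [hj]
    simpa using this

end Aux
section Aux2

lemma aux_coef {l α dd : ℝ} (hl : 0 < l) (k : ℕ) :
    ((2:ℝ)^k * l) ^ (α - dd - 1) * ((2:ℝ)^(k+2) * l) ^ (dd - α)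
      = (4:ℝ) ^ (dd - α) * l⁻¹ * ((2:ℝ)^k)⁻¹ := by
  have h2 : (0:ℝ) < 2 := two_pos
  have e1 : ((2:ℝ)^k) ^ (α - dd - 1) = (2:ℝ) ^ ((k:ℝ) * (α - dd - 1)) := by
    rw [← Real.rpow_natCast (2:ℝ) k, ← Real.rpow_mul h2.le]
  have e2 : ((2:ℝ)^(k+2)) ^ (dd - α) = (2:ℝ) ^ (((k:ℝ) + 2) * (dd - α)) := by
    rw [← Real.rpow_natCast (2:ℝ) (k+2), ← Real.rpow_mul h2.le]
    norm_num
  have e3 : l ^ (α - dd - 1) * l ^ (dd - α) = l⁻¹ := by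
    rw [← Real.rpow_add hl, show α - dd - 1 + (dd - α) = -1 by ring, Real.rpow_neg_one]
  have e4 : (2:ℝ) ^ ((k:ℝ) * (α - dd - 1)) * (2:ℝ) ^ (((k:ℝ) + 2) * (dd - α))
      = (4:ℝ) ^ (dd - α) * ((2:ℝ)^k)⁻¹ := by
    rw [← Real.rpow_add h2,
      show (k:ℝ) * (α - dd - 1) + ((k:ℝ) + 2) * (dd - α) = 2 * (dd - α) + (-(k:ℝ)) by ring,
      Real.rpow_add h2, Real.rpow_neg h2.le, Real.rpow_natCast]
    congr 1
    rw [show (4:ℝ) = (2:ℝ) ^ (2:ℕ) by norm_num, ← Real.rpow_natCast (2:ℝ) 2,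
      ← Real.rpow_mul h2.le]
    norm_num
  calc ((2:ℝ)^k * l) ^ (α - dd - 1) * ((2:ℝ)^(k+2) * l) ^ (dd - α)
      = (((2:ℝ)^k) ^ (α - dd - 1) * ((2:ℝ)^(k+2)) ^ (dd - α))
        * (l ^ (α - dd - 1) * l ^ (dd - α)) := by
        rw [Real.mul_rpow (by positivity) hl.le, Real.mul_rpow (by positivity) hl.le]; ring
    _ = ((4:ℝ) ^ (dd - α) * ((2:ℝ)^k)⁻¹) * l⁻¹ := by rw [e1, e2, e4, e3]
    _ = (4:ℝ) ^ (dd - α) * l⁻¹ * ((2:ℝ)^k)⁻¹ := by ring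

lemma aux_tsum_half : ∑' k : ℕ, ENNReal.ofReal (((2:ℝ)^k)⁻¹) = 2 := by
  have h : ∀ k : ℕ, ENNReal.ofReal (((2:ℝ)^k)⁻¹) = (2⁻¹ : ℝ≥0∞) ^ k := by
    intro k
    rw [← inv_pow, ENNReal.ofReal_pow (by norm_num : (0:ℝ) ≤ 2⁻¹)]
    congr 1
    rw [ENNReal.ofReal_inv_of_pos two_pos]
    norm_num
  rw [tsum_congr h, ENNReal.tsum_geometric, ENNReal.one_sub_inv_two, inv_inv]

end Aux2
set_option maxHeartbeats 1600000 in
/-- Oscillation estimate for Riesz potentials with data supported away from the cube. -/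
theorem riesz_oscillation_estimate (d : ℕ) (α β : ℝ) (hα : 0 < α) (hαd : α < d)
    (hβ : 0 < β) (hβd : β ≤ d) :
    ∃ C : ℝ, 0 < C ∧
      ∀ (a : Fin d → ℝ) (l : ℝ), 0 < l →
        ∀ f : Rd d → ℝ, Measurable f →
          Function.support f ⊆ (cubeO d (fun i => a i - l / 2) (2 * l))ᶜ →
          MeasureTheory.LocallyIntegrable (rieszR d α f) MeasureTheory.volume →
          ContinuousOn (rieszR d α f) (cubeO d a l) ∧
          ∃ c : ℝ,
            choquet d (hContent d β) (cubeO d a l) (fun y => |rieszR d α f y - c|) ≤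
              ENNReal.ofReal (C * l ^ β) * fracMaxF d α f (toRd d fun i => a i + l / 2) := by
  have hdR : (0:ℝ) < d := hα.trans hαd
  have hd0 : 0 < d := by exact_mod_cast hdR
  have hd1 : (1:ℝ) ≤ d := by exact_mod_cast hd0
  have hsd1 : (1:ℝ) ≤ Real.sqrt d := by
    rw [show (1:ℝ) = Real.sqrt 1 from (Real.sqrt_one).symm]
    exact Real.sqrt_le_sqrt hd1
  have hsd0 : (0:ℝ) < Real.sqrt d := by linarith
  set cD : ℝ := 1 + Real.sqrt d with hcDdef
  have hcD0 : (0:ℝ) < cD := by rw [hcDdef]; linarith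
  set γ : ℝ := α - d with hγdef
  have hγ : γ < 0 := by rw [hγdef]; linarith
  have hγ1 : γ - 1 < 0 := by linarith
  set cK : ℝ := (d - α) * cD ^ (1 - γ) with hcKdef
  have hcK0 : 0 < cK := by
    rw [hcKdef]
    exact mul_pos (by linarith) (Real.rpow_pos_of_pos hcD0 _)
  have hrc : 0 < rieszConst d α := by
    unfold rieszConst
    have h1 : 0 < Real.Gamma (α/2) := Real.Gamma_pos_of_pos (by linarith)
    have h2 : 0 < Real.Gamma (((d:ℝ)-α)/2) := Real.Gamma_pos_of_pos (by linarith)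
    positivity
  set cγ : ℝ := (rieszConst d α)⁻¹ with hcγdef
  have hcγ0 : 0 < cγ := inv_pos.2 hrc
  have hω : 0 < omegaConst β := by
    unfold omegaConst
    have h2 : 0 < Real.Gamma (β/2 + 1) := Real.Gamma_pos_of_pos (by linarith)
    positivity
  have h4p : (0:ℝ) < (4:ℝ) ^ ((d:ℝ) - α) := Real.rpow_pos_of_pos (by norm_num) _
  have hsb : (0:ℝ) < Real.sqrt d ^ β := Real.rpow_pos_of_pos hsd0 _
  refine ⟨cγ * cK * Real.sqrt d * (4:ℝ) ^ ((d:ℝ) - α) * omegaConst β * Real.sqrt d ^ β,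
    mul_pos (mul_pos (mul_pos (mul_pos (mul_pos hcγ0 hcK0) hsd0) h4p) hω) hsb, ?_⟩
  intro a l hl f hf hsupp _hloc
  set x₀ : Rd d := toRd d fun i => a i + l / 2 with hx₀def
  have hx₀i : ∀ i, x₀ i = a i + l / 2 := fun i => by simp [hx₀def, toRd]
  set Q : Set (Rd d) := cubeO d a l with hQdef
  have hmemQ : ∀ x : Rd d, x ∈ Q ↔ ∀ i, a i < x i ∧ x i < a i + l := fun x => Iff.rfl
  have hx₀Q : x₀ ∈ Q := by
    rw [hmemQ]
    intro i
    rw [hx₀i i]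
    constructor <;> linarith
  have hfar : ∀ y : Rd d, f y ≠ 0 → ∃ i, l ≤ |y i - x₀ i| := by
    intro y hy
    have hyn := hsupp (Function.mem_support.2 hy)
    simp only [Set.mem_compl_iff, cubeO, Set.mem_setOf_eq, not_forall] at hyn
    obtain ⟨i, hi⟩ := hyn
    rw [not_and_or, not_lt, not_lt] at hi
    refine ⟨i, ?_⟩
    rw [hx₀i i]
    rcases hi with h | h
    · exact le_abs.2 (Or.inr (by linarith))
    · exact le_abs.2 (Or.inl (by linarith))
  have hxQc : ∀ x ∈ Q, ∀ i, |x i - x₀ i| ≤ l / 2 := by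
    intro x hx i
    have h := (hmemQ x).1 hx i
    rw [hx₀i i]
    exact abs_le.2 ⟨by linarith [h.1], by linarith [h.2]⟩
  have hdxx₀ : ∀ x ∈ Q, dist x x₀ ≤ Real.sqrt d * (l / 2) := fun x hx =>
    aux_dist_le_sqrt x x₀ (by linarith) (hxQc x hx)
  have hgeom : ∀ x ∈ Q, ∀ y : Rd d, f y ≠ 0 →
      l / 2 ≤ dist x y ∧ l ≤ dist x₀ y ∧ dist x₀ y ≤ cD * dist x y ∧
        dist x y ≤ cD * dist x₀ y := by
    intro x hx y hy
    obtain ⟨i, hi⟩ := hfar y hy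
    have h1 : l ≤ dist x₀ y := by
      have h := aux_abs_coord_le_dist x₀ y i
      rw [abs_sub_comm] at h
      linarith
    have hc := hxQc x hx i
    have htri : |y i - x₀ i| ≤ |y i - x i| + |x i - x₀ i| := abs_sub_le _ _ _
    have h2 : l / 2 ≤ dist x y := by
      have hcd := aux_abs_coord_le_dist x y i
      rw [abs_sub_comm] at hcd
      linarith
    have hxx := hdxx₀ x hx
    have hsl : Real.sqrt d * (l/2) ≤ Real.sqrt d * dist x y :=
      mul_le_mul_of_nonneg_left h2 (Real.sqrt_nonneg _)
    have hsl' : Real.sqrt d * (l/2) ≤ Real.sqrt d * dist x₀ y := by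
      apply mul_le_mul_of_nonneg_left (by linarith) (Real.sqrt_nonneg _)
    have hexp : cD * dist x y = dist x y + Real.sqrt d * dist x y := by
      rw [hcDdef]; ring
    have hexp' : cD * dist x₀ y = dist x₀ y + Real.sqrt d * dist x₀ y := by
      rw [hcDdef]; ring
    have htr1 := dist_triangle x₀ x y
    have htr2 := dist_triangle x x₀ y
    have hsymm : dist x₀ x = dist x x₀ := dist_comm _ _
    refine ⟨h2, h1, by linarith, by linarith⟩
  have hcomp : ∀ x ∈ Q, ∀ y : Rd d, f y ≠ 0 →
      dist x y ^ γ ≤ cD ^ (-γ) * dist x₀ y ^ γ ∧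
        dist x₀ y ^ γ ≤ cD ^ (-γ) * dist x y ^ γ := by
    intro x hx y hy
    obtain ⟨h2, h1, h3, h4⟩ := hgeom x hx y hy
    have hx0 : 0 < dist x y := by linarith
    have h10 : 0 < dist x₀ y := by linarith
    have key : ∀ u v : ℝ, 0 < u → 0 < v → u ≤ cD * v → v ^ γ ≤ cD ^ (-γ) * u ^ γ := by
      intro u v hu hv huv
      have hdiv : u / cD ≤ v := (div_le_iff₀ hcD0).2 (by linarith [mul_comm cD v])
      have h := Real.rpow_le_rpow_of_nonpos (div_pos hu hcD0) hdiv hγ.le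
      rw [Real.div_rpow hu.le hcD0.le, div_eq_mul_inv, ← Real.rpow_neg hcD0.le] at h
      rwa [mul_comm] at h
    exact ⟨key _ _ h10 hx0 h3, key _ _ hx0 h10 h4⟩
  have hker : ∀ x ∈ Q, ∀ x' ∈ Q, ∀ y : Rd d, f y ≠ 0 →
      |dist x y ^ γ - dist x' y ^ γ| ≤ cK * dist x₀ y ^ (γ - 1) * dist x x' := by
    intro x hx x' hx' y hy
    obtain ⟨h2, h1, h3, _⟩ := hgeom x hx y hy
    obtain ⟨h2', _, h3', _⟩ := hgeom x' hx' y hy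
    have h10 : 0 < dist x₀ y := by linarith
    set r := dist x y with hr
    set r' := dist x' y with hr'
    set m := min r r' with hm
    set Mx := max r r' with hMx
    have hm0 : 0 < m := lt_min (by linarith) (by linarith)
    have hmm : dist x₀ y / cD ≤ m :=
      le_min ((div_le_iff₀ hcD0).2 (by linarith [mul_comm cD r]))
        ((div_le_iff₀ hcD0).2 (by linarith [mul_comm cD r']))
    have hMm : Mx - m ≤ dist x x' := by
      rw [hMx, hm, max_sub_min_eq_abs, abs_sub_comm]
      exact abs_dist_sub_le x x' y
    have hkey := aux_mvt_rpow hγ hm0 (min_le_max (a := r) (b := r'))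
    have hLHS : |r ^ γ - r' ^ γ| = |Mx ^ γ - m ^ γ| := by
      rcases le_total r r' with h | h
      · rw [hm, hMx, min_eq_left h, max_eq_right h, abs_sub_comm]
      · rw [hm, hMx, min_eq_right h, max_eq_left h]
    have hmono : m ^ (γ - 1) ≤ (dist x₀ y / cD) ^ (γ - 1) :=
      Real.rpow_le_rpow_of_nonpos (div_pos h10 hcD0) hmm (by linarith)
    have hdivp : (dist x₀ y / cD) ^ (γ - 1) = cD ^ (1 - γ) * dist x₀ y ^ (γ - 1) := by
      rw [Real.div_rpow h10.le hcD0.le, div_eq_mul_inv, ← Real.rpow_neg hcD0.le,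
        neg_sub, mul_comm]
    have hd0' : (0:ℝ) ≤ dist x₀ y ^ (γ - 1) := Real.rpow_nonneg h10.le _
    have hMm0 : (0:ℝ) ≤ Mx - m := by
      rw [hMx, hm]; exact sub_nonneg.2 min_le_max
    have hng : (0:ℝ) < -γ := by linarith
    calc |r ^ γ - r' ^ γ| = |Mx ^ γ - m ^ γ| := hLHS
      _ ≤ (-γ) * m ^ (γ - 1) * (Mx - m) := hkey
      _ ≤ ((-γ) * (cD ^ (1 - γ) * dist x₀ y ^ (γ - 1))) * dist x x' := by
          refine mul_le_mul ?_ hMm hMm0 ?_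
          · rw [← hdivp]
            exact mul_le_mul_of_nonneg_left hmono hng.le
          · positivity
      _ = cK * dist x₀ y ^ (γ - 1) * dist x x' := by
          rw [hcKdef, show -γ = (d:ℝ) - α by rw [hγdef]; ring]
          ring
  have hmK : ∀ x : Rd d, Measurable fun y => f y * dist x y ^ γ := fun x =>
    hf.mul (aux_measurable_kernel x hγ)
  have hmJ : Measurable fun y : Rd d => |f y| * dist x₀ y ^ (γ - 1) :=
    hf.abs.mul (aux_measurable_kernel x₀ hγ1)
  have hmono_int : ∀ (x x' : Rd d),
      (∀ y : Rd d, f y ≠ 0 → dist x' y ^ γ ≤ cD ^ (-γ) * dist x y ^ γ) →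
      Integrable (fun y => f y * dist x y ^ γ) volume →
      Integrable (fun y => f y * dist x' y ^ γ) volume := by
    intro x x' hcmp hint
    refine Integrable.mono' (hint.abs.const_mul (cD ^ (-γ)))
      (hmK x').aestronglyMeasurable (Filter.Eventually.of_forall fun y => ?_)
    by_cases hy : f y = 0
    · simp [hy]
    · rw [Real.norm_eq_abs, abs_mul, abs_mul,
        abs_of_nonneg (Real.rpow_nonneg (dist_nonneg : (0:ℝ) ≤ dist x' y) γ),
        abs_of_nonneg (Real.rpow_nonneg (dist_nonneg : (0:ℝ) ≤ dist x y) γ)]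
      calc |f y| * dist x' y ^ γ ≤ |f y| * (cD ^ (-γ) * dist x y ^ γ) :=
            mul_le_mul_of_nonneg_left (hcmp y hy) (abs_nonneg _)
        _ = cD ^ (-γ) * (|f y| * dist x y ^ γ) := by ring
  by_cases hP : Integrable (fun y => f y * dist x₀ y ^ γ) volume
  · -- integrable case
    have hIx : ∀ x ∈ Q, Integrable (fun y => f y * dist x y ^ γ) volume := fun x hx =>
      hmono_int x₀ x (fun y hy => (hcomp x hx y hy).1) hP
    have hJint : Integrable (fun y => |f y| * dist x₀ y ^ (γ - 1)) volume := by
      refine Integrable.mono' (hP.abs.const_mul l⁻¹) hmJ.aestronglyMeasurable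
        (Filter.Eventually.of_forall fun y => ?_)
      by_cases hy : f y = 0
      · simp [hy]
      · obtain ⟨_, h1, _, _⟩ := hgeom x₀ hx₀Q y hy
        have h10 : (0:ℝ) < dist x₀ y := by linarith
        have hre : dist x₀ y ^ (γ - 1) = dist x₀ y ^ γ * (dist x₀ y)⁻¹ := by
          rw [Real.rpow_sub_one h10.ne', div_eq_mul_inv]
        have hinv : (dist x₀ y)⁻¹ ≤ l⁻¹ := by
          apply inv_anti₀ hl h1
        rw [Real.norm_eq_abs,
          abs_of_nonneg (mul_nonneg (abs_nonneg _) (Real.rpow_nonneg dist_nonneg _)),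
          abs_mul, abs_of_nonneg (Real.rpow_nonneg (dist_nonneg : (0:ℝ) ≤ dist x₀ y) γ), hre]
        have hfr : (0:ℝ) ≤ |f y| * dist x₀ y ^ γ :=
          mul_nonneg (abs_nonneg _) (Real.rpow_nonneg dist_nonneg _)
        calc |f y| * (dist x₀ y ^ γ * (dist x₀ y)⁻¹)
            = (|f y| * dist x₀ y ^ γ) * (dist x₀ y)⁻¹ := by ring
          _ ≤ (|f y| * dist x₀ y ^ γ) * l⁻¹ := mul_le_mul_of_nonneg_left hinv hfr
          _ = l⁻¹ * (|f y| * dist x₀ y ^ γ) := by ring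
    set J : ℝ := ∫ y, |f y| * dist x₀ y ^ (γ - 1) with hJdef
    have hJ0 : 0 ≤ J := integral_nonneg fun y =>
      mul_nonneg (abs_nonneg _) (Real.rpow_nonneg dist_nonneg _)
    set L : ℝ := cγ * cK * J with hLdef
    have hL0 : 0 ≤ L := by
      rw [hLdef]; exact mul_nonneg (mul_nonneg hcγ0.le hcK0.le) hJ0
    have hEST : ∀ x ∈ Q, ∀ x' ∈ Q,
        |rieszR d α f x - rieszR d α f x'| ≤ L * dist x x' := by
      intro x hx x' hx'
      have hsub : rieszR d α f x - rieszR d α f x'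
          = cγ * ∫ y, (f y * dist x y ^ γ - f y * dist x' y ^ γ) := by
        unfold rieszR
        rw [← hγdef, ← hcγdef, integral_sub (hIx x hx) (hIx x' hx')]
        ring
      rw [hsub, abs_mul, abs_of_pos hcγ0]
      have habs : |∫ y, (f y * dist x y ^ γ - f y * dist x' y ^ γ)|
          ≤ ∫ y, |f y * dist x y ^ γ - f y * dist x' y ^ γ| := by
        simpa [Real.norm_eq_abs] using
          norm_integral_le_integral_norm (μ := volume)
            (fun y => f y * dist x y ^ γ - f y * dist x' y ^ γ)
      have hint1 : Integrable (fun y => |f y * dist x y ^ γ - f y * dist x' y ^ γ|) volume :=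
        ((hIx x hx).sub (hIx x' hx')).abs
      have hint2 : Integrable
          (fun y => (cK * dist x x') * (|f y| * dist x₀ y ^ (γ - 1))) volume :=
        hJint.const_mul _
      have hpt : ∀ y, |f y * dist x y ^ γ - f y * dist x' y ^ γ|
          ≤ (cK * dist x x') * (|f y| * dist x₀ y ^ (γ - 1)) := by
        intro y
        by_cases hy : f y = 0
        · simp [hy]
        · have hk := hker x hx x' hx' y hy
          calc |f y * dist x y ^ γ - f y * dist x' y ^ γ|
              = |f y| * |dist x y ^ γ - dist x' y ^ γ| := by rw [← abs_mul, mul_sub]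
            _ ≤ |f y| * (cK * dist x₀ y ^ (γ - 1) * dist x x') :=
                mul_le_mul_of_nonneg_left hk (abs_nonneg _)
            _ = (cK * dist x x') * (|f y| * dist x₀ y ^ (γ - 1)) := by ring
      have hmono := integral_mono hint1 hint2 hpt
      have hcm : (∫ y, (cK * dist x x') * (|f y| * dist x₀ y ^ (γ - 1)))
          = (cK * dist x x') * J := by
        rw [hJdef]
        exact integral_const_mul _ _
      calc cγ * |∫ y, (f y * dist x y ^ γ - f y * dist x' y ^ γ)|
          ≤ cγ * ∫ y, |f y * dist x y ^ γ - f y * dist x' y ^ γ| :=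
            mul_le_mul_of_nonneg_left habs hcγ0.le
        _ ≤ cγ * ((cK * dist x x') * J) :=
            mul_le_mul_of_nonneg_left (hmono.trans_eq hcm) hcγ0.le
        _ = L * dist x x' := by rw [hLdef]; ring
    have hcont : ContinuousOn (rieszR d α f) Q := by
      rw [Metric.continuousOn_iff]
      intro b hb ε hε
      refine ⟨ε / (L + 1), by positivity, fun x hx hdxb => ?_⟩
      rw [Real.dist_eq]
      have h1 := hEST x hx b hb
      have h2 : L * dist x b ≤ L * (ε / (L + 1)) :=
        mul_le_mul_of_nonneg_left hdxb.le hL0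
      have h3 : L * (ε / (L + 1)) < (L + 1) * (ε / (L + 1)) :=
        mul_lt_mul_of_pos_right (by linarith) (by positivity)
      have h4 : (L + 1) * (ε / (L + 1)) = ε := by field_simp
      linarith
    refine ⟨hcont, rieszR d α f x₀, ?_⟩
    set S : ℝ := L * (Real.sqrt d * (l / 2)) with hSdef
    have hbd : ∀ x ∈ Q, |rieszR d α f x - rieszR d α f x₀| ≤ S := fun x hx =>
      (hEST x hx x₀ hx₀Q).trans
        (by rw [hSdef]; exact mul_le_mul_of_nonneg_left (hdxx₀ x hx) hL0)
    have hQball : Q ⊆ Metric.ball x₀ (Real.sqrt d * l) := by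
      intro x hx
      rw [Metric.mem_ball]
      calc dist x x₀ ≤ Real.sqrt d * (l / 2) := hdxx₀ x hx
        _ < Real.sqrt d * l := by nlinarith
    have hQc : hContent d β Q ≤ ENNReal.ofReal (omegaConst β * (Real.sqrt d * l) ^ β) :=
      aux_hContent_ball hβ hQball
    have hchoq : choquet d (hContent d β) Q (fun y => |rieszR d α f y - rieszR d α f x₀|)
        ≤ ENNReal.ofReal (omegaConst β * (Real.sqrt d * l) ^ β) * ENNReal.ofReal S := by
      unfold choquet
      calc (∫⁻ t in Set.Ioi (0:ℝ),
            hContent d β {x | x ∈ Q ∧ t < |rieszR d α f x - rieszR d α f x₀|})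
          ≤ ∫⁻ t in Set.Ioi (0:ℝ), (Set.Iio S).indicator
              (fun _ => ENNReal.ofReal (omegaConst β * (Real.sqrt d * l) ^ β)) t := by
            apply lintegral_mono
            intro t
            by_cases ht : t < S
            · rw [Set.indicator_of_mem (Set.mem_Iio.2 ht)]
              exact (aux_hContent_mono (fun x hx => hx.1)).trans hQc
            · rw [Set.indicator_of_notMem (by simpa using ht)]
              refine le_trans (aux_hContent_mono ?_) (aux_hContent_empty hβ).le
              intro x hx
              exact absurd hx.2 (not_lt.2 ((hbd x hx.1).trans (not_lt.1 ht)))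
        _ = ENNReal.ofReal (omegaConst β * (Real.sqrt d * l) ^ β) * ENNReal.ofReal S := by
            rw [lintegral_indicator measurableSet_Iio, setLIntegral_const,
              Measure.restrict_apply measurableSet_Iio, Set.Iio_inter_Ioi, Real.volume_Ioo,
              sub_zero]
    set M := fracMaxF d α f x₀ with hMdef
    set J' := ∫⁻ y, ENNReal.ofReal (|f y| * dist x₀ y ^ (γ - 1)) with hJ'def
    have hJJ' : ENNReal.ofReal J ≤ J' := by
      rw [hJdef, integral_eq_lintegral_of_nonneg_ae
        (Filter.Eventually.of_forall fun y =>
          mul_nonneg (abs_nonneg _) (Real.rpow_nonneg dist_nonneg _))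
        hmJ.aestronglyMeasurable]
      exact ENNReal.ofReal_toReal_le
    have hproj : ∀ i : Fin d, Measurable fun y : Rd d => y i := fun i =>
      (EuclideanSpace.proj (𝕜 := ℝ) (ι := Fin d) i).continuous.measurable
    have hAnn : J' ≤ ENNReal.ofReal ((4:ℝ) ^ ((d:ℝ) - α) * l⁻¹) * 2 * M := by
      set A : ℕ → Set (Rd d) := fun k =>
        {y | (∃ i, 2 ^ k * l ≤ |y i - x₀ i|) ∧ ∀ i, |y i - x₀ i| ≤ 2 ^ (k+1) * l} with hAdef
      have hAmeas : ∀ k, MeasurableSet (A k) := by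
        intro k
        have e : A k
            = (⋃ i, {y : Rd d | 2 ^ k * l ≤ |y i - x₀ i|}) ∩
              (⋂ i, {y : Rd d | |y i - x₀ i| ≤ 2 ^ (k+1) * l}) := by
          rw [hAdef]
          ext y
          simp [Set.mem_iUnion, Set.mem_iInter]
        rw [e]
        exact MeasurableSet.inter
          (MeasurableSet.iUnion fun i =>
            measurableSet_le measurable_const (((hproj i).sub_const (x₀ i)).abs))
          (MeasurableSet.iInter fun i =>
            measurableSet_le (((hproj i).sub_const (x₀ i)).abs) measurable_const)
      haveI hne : Nonempty (Fin d) := Fin.pos_iff_nonempty.1 hd0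
      have hcov : ∀ y : Rd d, f y ≠ 0 → ∃ k, y ∈ A k := by
        intro y hy
        obtain ⟨i₀, hi₀⟩ := hfar y hy
        have hTl : l ≤ Finset.univ.sup' Finset.univ_nonempty
            (fun i : Fin d => |y i - x₀ i|) :=
          hi₀.trans (Finset.le_sup' (fun i : Fin d => |y i - x₀ i|) (Finset.mem_univ i₀))
        obtain ⟨k, hk1, hk2⟩ := aux_exists_pow hl hTl
        refine ⟨k, ⟨?_, fun i => ?_⟩⟩
        · obtain ⟨i, _, hieq⟩ := Finset.exists_mem_eq_sup' Finset.univ_nonempty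
            (fun i : Fin d => |y i - x₀ i|)
          exact ⟨i, by rw [← hieq]; exact hk1⟩
        · exact (Finset.le_sup' (fun i : Fin d => |y i - x₀ i|)
            (Finset.mem_univ i)).trans hk2.le
      have hXk : ∀ k : ℕ,
          (∫⁻ y in cubeSet d (fun i => x₀ i - 2 ^ (k+1) * l) (2 ^ (k+2) * l),
            ENNReal.ofReal |f y|) * ENNReal.ofReal ((2 ^ (k+2) * l) ^ (α - (d:ℝ))) ≤ M := by
        intro k
        rw [hMdef]
        unfold fracMaxF
        have hmem : x₀ ∈ cubeSet d (fun i => x₀ i - 2 ^ (k+1) * l) (2 ^ (k+2) * l) := by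
          intro i
          have hp1 : (0:ℝ) < 2 ^ (k+1) * l := by positivity
          have hp2 : (2:ℝ) ^ (k+2) * l = 2 ^ (k+1) * l + 2 ^ (k+1) * l := by ring
          constructor
          · show x₀ i - 2 ^ (k+1) * l ≤ x₀ i
            linarith
          · show x₀ i ≤ x₀ i - 2 ^ (k+1) * l + 2 ^ (k+2) * l
            linarith
        exact le_iSup_of_le (fun i => x₀ i - 2 ^ (k+1) * l)
          (le_iSup_of_le (2 ^ (k+2) * l)
            (le_iSup_of_le (by positivity) (le_iSup_of_le hmem le_rfl)))
      have hAk : ∀ k : ℕ, (∫⁻ y in A k, ENNReal.ofReal (|f y| * dist x₀ y ^ (γ - 1)))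
          ≤ ENNReal.ofReal ((2 ^ k * l) ^ (γ - 1) * (2 ^ (k+2) * l) ^ ((d:ℝ) - α)) * M := by
        intro k
        have hsubQ : A k ⊆ cubeSet d (fun i => x₀ i - 2 ^ (k+1) * l) (2 ^ (k+2) * l) := by
          intro y hy i
          have h2 := abs_le.1 (hy.2 i)
          have hp2 : (2:ℝ) ^ (k+2) * l = 2 ^ (k+1) * l + 2 ^ (k+1) * l := by ring
          constructor
          · show x₀ i - 2 ^ (k+1) * l ≤ y i
            linarith [h2.1]
          · show y i ≤ x₀ i - 2 ^ (k+1) * l + 2 ^ (k+2) * l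
            linarith [h2.2]
        have hXX : (∫⁻ y in cubeSet d (fun i => x₀ i - 2 ^ (k+1) * l) (2 ^ (k+2) * l),
            ENNReal.ofReal |f y|) ≤ M * ENNReal.ofReal ((2 ^ (k+2) * l) ^ ((d:ℝ) - α)) := by
          have hcancel : ENNReal.ofReal ((2 ^ (k+2) * l) ^ (α - (d:ℝ)))
              * ENNReal.ofReal ((2 ^ (k+2) * l) ^ ((d:ℝ) - α)) = 1 := by
            rw [← ENNReal.ofReal_mul (Real.rpow_nonneg (by positivity) _),
              ← Real.rpow_add (by positivity),
              show α - (d:ℝ) + ((d:ℝ) - α) = 0 by ring, Real.rpow_zero, ENNReal.ofReal_one]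
          calc (∫⁻ y in cubeSet d (fun i => x₀ i - 2 ^ (k+1) * l) (2 ^ (k+2) * l),
                ENNReal.ofReal |f y|)
              = ((∫⁻ y in cubeSet d (fun i => x₀ i - 2 ^ (k+1) * l) (2 ^ (k+2) * l),
                ENNReal.ofReal |f y|) * ENNReal.ofReal ((2 ^ (k+2) * l) ^ (α - (d:ℝ))))
                * ENNReal.ofReal ((2 ^ (k+2) * l) ^ ((d:ℝ) - α)) := by
                rw [mul_assoc, hcancel, mul_one]
            _ ≤ M * ENNReal.ofReal ((2 ^ (k+2) * l) ^ ((d:ℝ) - α)) :=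
                mul_le_mul_left (hXk k) _
        calc (∫⁻ y in A k, ENNReal.ofReal (|f y| * dist x₀ y ^ (γ - 1)))
            ≤ ∫⁻ y in A k, ENNReal.ofReal ((2 ^ k * l) ^ (γ - 1)) * ENNReal.ofReal |f y| := by
              refine setLIntegral_mono (measurable_const.mul hf.abs.ennreal_ofReal)
                fun y hy => ?_
              obtain ⟨⟨i, hi⟩, _⟩ := hy
              have hr : 2 ^ k * l ≤ dist x₀ y := by
                have h := aux_abs_coord_le_dist x₀ y i
                rw [abs_sub_comm] at h
                linarith
              have hrp : (0:ℝ) < 2 ^ k * l := by positivity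
              have hmono := Real.rpow_le_rpow_of_nonpos hrp hr
                (by linarith : γ - 1 ≤ 0)
              rw [← ENNReal.ofReal_mul (Real.rpow_nonneg hrp.le _)]
              apply ENNReal.ofReal_le_ofReal
              calc |f y| * dist x₀ y ^ (γ - 1)
                  ≤ |f y| * (2 ^ k * l) ^ (γ - 1) :=
                    mul_le_mul_of_nonneg_left hmono (abs_nonneg _)
                _ = (2 ^ k * l) ^ (γ - 1) * |f y| := mul_comm _ _
          _ = ENNReal.ofReal ((2 ^ k * l) ^ (γ - 1)) * ∫⁻ y in A k, ENNReal.ofReal |f y| :=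
              lintegral_const_mul _ hf.abs.ennreal_ofReal
          _ ≤ ENNReal.ofReal ((2 ^ k * l) ^ (γ - 1))
              * ∫⁻ y in cubeSet d (fun i => x₀ i - 2 ^ (k+1) * l) (2 ^ (k+2) * l),
                ENNReal.ofReal |f y| :=
              mul_le_mul_right (lintegral_mono_set hsubQ) _
          _ ≤ ENNReal.ofReal ((2 ^ k * l) ^ (γ - 1))
              * (M * ENNReal.ofReal ((2 ^ (k+2) * l) ^ ((d:ℝ) - α))) :=
              mul_le_mul_right hXX _
          _ = ENNReal.ofReal ((2 ^ k * l) ^ (γ - 1) * (2 ^ (k+2) * l) ^ ((d:ℝ) - α)) * M := by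
              rw [ENNReal.ofReal_mul (Real.rpow_nonneg (by positivity) _)]
              ring
      calc J' ≤ ∫⁻ y, Set.indicator (⋃ k, A k)
            (fun y => ENNReal.ofReal (|f y| * dist x₀ y ^ (γ - 1))) y := by
            rw [hJ'def]
            apply lintegral_mono
            intro y
            by_cases hy : y ∈ ⋃ k, A k
            · rw [Set.indicator_of_mem hy]
            · rw [Set.indicator_of_notMem hy]
              by_cases hfy : f y = 0
              · simp [hfy]
              · exact absurd (Set.mem_iUnion.2 (hcov y hfy)) hy
        _ = ∫⁻ y in ⋃ k, A k, ENNReal.ofReal (|f y| * dist x₀ y ^ (γ - 1)) :=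
            lintegral_indicator (MeasurableSet.iUnion hAmeas) _
        _ ≤ ∑' k : ℕ, ∫⁻ y in A k, ENNReal.ofReal (|f y| * dist x₀ y ^ (γ - 1)) :=
            lintegral_iUnion_le _ _
        _ ≤ ∑' k : ℕ, ENNReal.ofReal ((2 ^ k * l) ^ (γ - 1)
              * (2 ^ (k+2) * l) ^ ((d:ℝ) - α)) * M :=
            ENNReal.tsum_le_tsum hAk
        _ = (∑' k : ℕ, ENNReal.ofReal ((2 ^ k * l) ^ (γ - 1)
              * (2 ^ (k+2) * l) ^ ((d:ℝ) - α))) * M := ENNReal.tsum_mul_right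
        _ = ENNReal.ofReal ((4:ℝ) ^ ((d:ℝ) - α) * l⁻¹) * 2 * M := by
            congr 1
            have hco : ∀ k : ℕ, ((2:ℝ) ^ k * l) ^ (γ - 1) * ((2:ℝ) ^ (k+2) * l) ^ ((d:ℝ) - α)
                = (4:ℝ) ^ ((d:ℝ) - α) * l⁻¹ * ((2:ℝ) ^ k)⁻¹ := by
              intro k
              rw [show γ - 1 = α - (d:ℝ) - 1 by rw [hγdef]]
              exact aux_coef hl k
            calc (∑' k : ℕ, ENNReal.ofReal ((2 ^ k * l) ^ (γ - 1)
                  * (2 ^ (k+2) * l) ^ ((d:ℝ) - α)))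
                = ∑' k : ℕ, ENNReal.ofReal ((4:ℝ) ^ ((d:ℝ) - α) * l⁻¹)
                  * ENNReal.ofReal (((2:ℝ) ^ k)⁻¹) := by
                  refine tsum_congr fun k => ?_
                  rw [hco k, ENNReal.ofReal_mul (by positivity)]
              _ = ENNReal.ofReal ((4:ℝ) ^ ((d:ℝ) - α) * l⁻¹)
                  * ∑' k : ℕ, ENNReal.ofReal (((2:ℝ) ^ k)⁻¹) := ENNReal.tsum_mul_left
              _ = ENNReal.ofReal ((4:ℝ) ^ ((d:ℝ) - α) * l⁻¹) * 2 := by rw [aux_tsum_half]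
    -- final combination
    have hofS : ENNReal.ofReal S
        ≤ ENNReal.ofReal (cγ * cK * (Real.sqrt d * (l / 2)))
          * (ENNReal.ofReal ((4:ℝ) ^ ((d:ℝ) - α) * l⁻¹) * 2 * M) := by
      have hSeq : S = (cγ * cK * (Real.sqrt d * (l / 2))) * J := by
        rw [hSdef, hLdef]; ring
      rw [hSeq, ENNReal.ofReal_mul (by positivity)]
      exact mul_le_mul_right (hJJ'.trans hAnn) _
    refine hchoq.trans ?_
    calc ENNReal.ofReal (omegaConst β * (Real.sqrt d * l) ^ β) * ENNReal.ofReal S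
        ≤ ENNReal.ofReal (omegaConst β * (Real.sqrt d * l) ^ β)
          * (ENNReal.ofReal (cγ * cK * (Real.sqrt d * (l / 2)))
            * (ENNReal.ofReal ((4:ℝ) ^ ((d:ℝ) - α) * l⁻¹) * 2 * M)) :=
          mul_le_mul_right hofS _
      _ = (ENNReal.ofReal (omegaConst β * (Real.sqrt d * l) ^ β)
            * ENNReal.ofReal (cγ * cK * (Real.sqrt d * (l / 2)))
            * ENNReal.ofReal ((4:ℝ) ^ ((d:ℝ) - α) * l⁻¹) * ENNReal.ofReal 2) * M := by
          rw [show (2:ℝ≥0∞) = ENNReal.ofReal 2 by simp]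
          ring
      _ = ENNReal.ofReal (cγ * cK * Real.sqrt d * (4:ℝ) ^ ((d:ℝ) - α) * omegaConst β
            * Real.sqrt d ^ β * l ^ β) * M := by
          rw [← ENNReal.ofReal_mul (by positivity), ← ENNReal.ofReal_mul (by positivity),
            ← ENNReal.ofReal_mul (by positivity)]
          congr 1
          rw [Real.mul_rpow (Real.sqrt_nonneg _) hl.le]
          field_simp
      _ = ENNReal.ofReal ((cγ * cK * Real.sqrt d * (4:ℝ) ^ ((d:ℝ) - α) * omegaConst β
            * Real.sqrt d ^ β) * l ^ β) * M := by rw [mul_assoc]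
  · -- non-integrable case
    have hallnot : ∀ x ∈ Q, ¬ Integrable (fun y => f y * dist x y ^ γ) volume := by
      intro x hx hint
      exact hP (hmono_int x x₀ (fun y hy => (hcomp x hx y hy).2) hint)
    have hvan : ∀ x ∈ Q, rieszR d α f x = 0 := by
      intro x hx
      unfold rieszR
      rw [← hγdef, ← hcγdef, integral_undef (hallnot x hx), mul_zero]
    refine ⟨continuousOn_const.congr hvan, 0, ?_⟩
    have hch : choquet d (hContent d β) Q (fun y => |rieszR d α f y - 0|) ≤ 0 := by
      unfold choquet
      calc (∫⁻ t in Set.Ioi (0:ℝ),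
            hContent d β {x | x ∈ Q ∧ t < |rieszR d α f x - 0|})
          = ∫⁻ _ in Set.Ioi (0:ℝ), (0:ℝ≥0∞) := by
            refine setLIntegral_congr_fun measurableSet_Ioi
              (fun t ht => ?_)
            refine le_antisymm
              (le_trans (aux_hContent_mono ?_) (aux_hContent_empty hβ).le) zero_le
            intro x hx
            exfalso
            have h2 := hx.2
            rw [hvan x hx.1] at h2
            simp only [sub_zero, abs_zero] at h2
            exact absurd h2 (not_lt.2 (le_of_lt ht))
        _ = 0 := lintegral_zero
        _ ≤ 0 := le_rfl
    exact le_trans hch zero_le
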